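/- Let F be a t-intersecting family of k-multisets of [n] and T an arbitrary t-multiset. If F_T = {A ∈ F : T ⊆ A} is not all of F, then |F_T| ≤ k · binomial(n·k, k−t−1). -/

import Mathlib

/-- If `F` is t-intersecting and `T` is a t-multiset with `F_T ≠ F`, then
`|F_T| ≤ k * (n*k).choose (k - t - 1)`. -/
theorem kernel_part_small (n k t : ℕ) (F : Finset (Fin n → ℕ))
    (hF : ∀ A ∈ F, ∑ i, A i = k)
    (hint : ∀ A ∈ F, ∀ B ∈ F, t ≤ ∑ i, min (A i) (B i))
    (T : Fin n → ℕ) (hT : ∑ i, T i = t)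
    (hne : F.filter (fun A => ∀ i, T i ≤ A i) ≠ F) :
    (F.filter (fun A => ∀ i, T i ≤ A i)).card ≤ k * (n * k).choose (k - t - 1) := by
  classical
  set G := F.filter (fun A => ∀ i, T i ≤ A i) with hGdef
  -- obtain B ∈ F not containing T
  obtain ⟨B, hBF, hBT⟩ : ∃ B ∈ F, ¬ ∀ i, T i ≤ B i := by
    by_contra h
    push_neg at h
    exact hne (Finset.filter_eq_self.mpr (by intro A hA; exact h A hA))
  obtain ⟨i₀, hi₀⟩ : ∃ i, B i < T i := by
    push_neg at hBT; exact hBT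
  -- key lemma
  have key : ∀ A ∈ G, ∃ j, T j < A j ∧ T j < B j := by
    intro A hA
    rw [hGdef, Finset.mem_filter] at hA
    obtain ⟨hAF, hAT⟩ := hA
    by_contra h
    push_neg at h
    have hlt : ∑ i, min (A i) (B i) < t := by
      rw [← hT]
      apply Finset.sum_lt_sum
      · intro i _
        rcases le_or_gt (A i) (T i) with h1 | h1
        · exact le_trans (min_le_left _ _) h1
        · exact le_trans (min_le_right _ _) (h i h1)
      · exact ⟨i₀, Finset.mem_univ _, lt_of_le_of_lt (min_le_right _ _) hi₀⟩
    exact absurd (hint A hAF B hBF) (not_le.mpr hlt)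
  rcases Finset.eq_empty_or_nonempty G with hGe | ⟨A₀, hA₀⟩
  · rw [hGe]; simp
  -- t + 1 ≤ k
  have hA₀F : A₀ ∈ F := Finset.mem_filter.mp hA₀ |>.1
  have hA₀T : ∀ i, T i ≤ A₀ i := (Finset.mem_filter.mp hA₀).2
  obtain ⟨j₀, hj₀, _⟩ := key A₀ hA₀
  have htk : t + 1 ≤ k := by
    have : ∑ i, T i < ∑ i, A₀ i :=
      Finset.sum_lt_sum (fun i _ => hA₀T i) ⟨j₀, Finset.mem_univ _, hj₀⟩
    rw [hT, hF A₀ hA₀F] at this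
    omega
  have hk1 : 1 ≤ k := by omega
  -- the injection
  set S : Finset (Fin n) := Finset.univ.filter (fun j => T j < B j) with hSdef
  set m := k - t - 1 with hm
  set Tar : Finset (Fin n × (Fin n → ℕ)) := S ×ˢ Finset.piAntidiag Finset.univ m with hTar
  set f : (Fin n → ℕ) → Fin n × (Fin n → ℕ) := fun A =>
    if h : ∃ j, T j < A j ∧ T j < B j then
      (h.choose, fun i => A i - T i - (if i = h.choose then 1 else 0))
    else (i₀, A) with hfdef
  have hcard : G.card ≤ Tar.card := by
    apply Finset.card_le_card_of_injOn f
    · intro A hA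
      have h := key A hA
      have hAF : A ∈ F := (Finset.mem_filter.mp hA).1
      have hAT : ∀ i, T i ≤ A i := (Finset.mem_filter.mp hA).2
      rw [hfdef]
      simp only [dif_pos h]
      rw [hTar, Finset.mem_coe, Finset.mem_product]
      dsimp only
      constructor
      · rw [hSdef]; simp [h.choose_spec.2]
      · rw [Finset.mem_piAntidiag]
        refine ⟨?_, fun i _ => Finset.mem_univ i⟩
        have hpt : ∀ i, A i = (A i - T i - (if i = h.choose then 1 else 0)) + T i
            + (if i = h.choose then 1 else 0) := by
          intro i
          have := hAT i
          rcases eq_or_ne i h.choose with rfl | hne'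
          · have := h.choose_spec.1; simp; omega
          · simp [hne']; omega
        have hsum : ∑ i, A i = (∑ i, (A i - T i - (if i = h.choose then 1 else 0)))
            + (∑ i, T i) + ∑ i, (if i = h.choose then 1 else 0) := by
          rw [← Finset.sum_add_distrib, ← Finset.sum_add_distrib]
          exact Finset.sum_congr rfl fun i _ => hpt i
        rw [hF A hAF, hT] at hsum
        rw [Finset.sum_ite_eq' Finset.univ h.choose (fun _ => 1)] at hsum
        simp at hsum
        omega
    · intro A hA A' hA' hAA'
      have h := key A hA
      have h' := key A' hA'
      rw [hfdef] at hAA'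
      simp only [dif_pos h, dif_pos h', Prod.mk.injEq] at hAA'
      obtain ⟨hj, hg⟩ := hAA'
      have hAT : ∀ i, T i ≤ A i := (Finset.mem_filter.mp hA).2
      have hAT' : ∀ i, T i ≤ A' i := (Finset.mem_filter.mp hA').2
      have hj' := h'.choose_spec.1
      rw [← hj] at hj' hg
      funext i
      have hgi := congrFun hg i
      rcases eq_or_ne i h.choose with rfl | hne'
      · have h1 := h.choose_spec.1
        simp only [if_pos rfl, if_true, eq_self_iff_true] at hgi
        have := hAT h.choose; have := hAT' h.choose
        omega
      · simp only [if_neg hne'] at hgi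
        have := hAT i; have := hAT' i
        omega
  -- cardinality of the target
  have hS : S.card ≤ k := by
    have h1 : S.card ≤ ∑ j ∈ S, B j := by
      have : ∀ j ∈ S, 1 ≤ B j := by
        intro j hj
        rw [hSdef, Finset.mem_filter] at hj
        omega
      calc S.card = ∑ _j ∈ S, 1 := by simp
        _ ≤ ∑ j ∈ S, B j := Finset.sum_le_sum this
    have h2 : ∑ j ∈ S, B j ≤ ∑ j, B j :=
      Finset.sum_le_sum_of_subset (Finset.subset_univ S)
    rw [hF B hBF] at h2
    omega
  have hanti : (Finset.piAntidiag (Finset.univ : Finset (Fin n)) m).card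
      = (n + m - 1).choose m := by
    rw [← Finset.map_sym_eq_piAntidiag, Finset.card_map, Finset.sym_univ,
      Finset.card_univ, Sym.card_sym_eq_choose, Fintype.card_fin]
  have hchoose : (n + m - 1).choose m ≤ (n * k).choose m := by
    apply Nat.choose_le_choose
    have hn1 : 1 ≤ n := i₀.pos
    have : n + k ≤ n * k + 1 := by nlinarith
    omega
  calc G.card ≤ Tar.card := hcard
    _ = S.card * (n + m - 1).choose m := by rw [hTar, Finset.card_product, hanti]
    _ ≤ k * (n * k).choose m := Nat.mul_le_mul hS hchoose
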